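/- Let g(y) = (y/2)(1 − √((2y−1)(3−2y))) for y ∈ [1/2, 3/2]. Then g(1/2) = 1/4, g(1) = 0, g(3/2) = 3/4, g is strictly decreasing on [1/2, 1], and g is strictly increasing on [1, 3/2]. -/
import Mathlib


open Set Real

/-- g(y) = (y/2)·(1 − √((2y−1)(3−2y))) of Example 7. -/
noncomputable def gEx7 (y : ℝ) : ℝ :=
  y / 2 * (1 - Real.sqrt ((2 * y - 1) * (3 - 2 * y)))

private lemma cube_mono_aux {a b : ℝ} (ha1 : 1/2 ≤ a) (hb2 : b ≤ 1)
    (ha2 : a ≤ 1) (hb1 : 1/2 ≤ b) (hab : a < b) :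
    b * (b - 1) ^ 2 ≤ a * (a - 1) ^ 2 := by
  nlinarith [mul_nonneg (mul_nonneg (by linarith : (0:ℝ) ≤ b - a)
      (by linarith : (0:ℝ) ≤ 1 - a)) (by linarith : (0:ℝ) ≤ a - 1/2),
    mul_nonneg (mul_nonneg (by linarith : (0:ℝ) ≤ b - a)
      (by linarith : (0:ℝ) ≤ 1 - b)) (by linarith : (0:ℝ) ≤ b - 1/2),
    mul_nonneg (mul_nonneg (by linarith : (0:ℝ) ≤ b - a)
      (by linarith : (0:ℝ) ≤ a)) (by linarith : (0:ℝ) ≤ 1 - b),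
    mul_nonneg (mul_nonneg (by linarith : (0:ℝ) ≤ b - a)
      (by linarith : (0:ℝ) ≤ b)) (by linarith : (0:ℝ) ≤ 1 - a)]

set_option maxHeartbeats 1000000 in
theorem stmt_17 :
    gEx7 (1/2) = 1/4 ∧ gEx7 1 = 0 ∧ gEx7 (3/2) = 3/4 ∧
    StrictAntiOn gEx7 (Icc (1/2) 1) ∧
    StrictMonoOn gEx7 (Icc 1 (3/2)) := by
  refine ⟨?_, ?_, ?_, ?_, ?_⟩
  · simp [gEx7]; norm_num
  · simp [gEx7]; norm_num
  · simp [gEx7]; norm_num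
  · -- strictly decreasing on [1/2, 1]
    intro a ha b hb hab
    obtain ⟨ha1, ha2⟩ := ha
    obtain ⟨hb1, hb2⟩ := hb
    set sa := Real.sqrt ((2 * a - 1) * (3 - 2 * a)) with hsa_def
    set sb := Real.sqrt ((2 * b - 1) * (3 - 2 * b)) with hsb_def
    have hqa : (0:ℝ) ≤ (2 * a - 1) * (3 - 2 * a) := by nlinarith
    have hqb : (0:ℝ) ≤ (2 * b - 1) * (3 - 2 * b) := by nlinarith
    have hsa0 : 0 ≤ sa := Real.sqrt_nonneg _
    have hsb0 : 0 ≤ sb := Real.sqrt_nonneg _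
    have hsa2 : sa ^ 2 = (2 * a - 1) * (3 - 2 * a) := Real.sq_sqrt hqa
    have hsb2 : sb ^ 2 = (2 * b - 1) * (3 - 2 * b) := Real.sq_sqrt hqb
    have hsa1 : sa ≤ 1 := Real.sqrt_le_one.mpr (by nlinarith)
    have hsb1 : sb ≤ 1 := Real.sqrt_le_one.mpr (by nlinarith)
    have hab' : sa < sb := by
      apply Real.sqrt_lt_sqrt hqa
      nlinarith
    -- key: b*(1-sb) < a*(1-sa)
    have hkey : b * (1 - sb) < a * (1 - sa) := by
      have hpos : (0:ℝ) < (1 + sa) * (1 + sb) := by nlinarith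
      have h1 : b * (1 - sb) * ((1 + sa) * (1 + sb)) = 4 * b * (b - 1) ^ 2 * (1 + sa) := by
        linear_combination (-b * (1 + sa)) * hsb2
      have h2 : a * (1 - sa) * ((1 + sa) * (1 + sb)) = 4 * a * (a - 1) ^ 2 * (1 + sb) := by
        linear_combination (-a * (1 + sb)) * hsa2
      have h3 : b * (b - 1) ^ 2 ≤ a * (a - 1) ^ 2 :=
        cube_mono_aux ha1 hb2 ha2 hb1 hab
      have h4 : 0 < a * (a - 1) ^ 2 := by nlinarith
      have h5 : 4 * b * (b - 1) ^ 2 * (1 + sa) < 4 * a * (a - 1) ^ 2 * (1 + sb) := by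
        nlinarith
      have h6 : b * (1 - sb) * ((1 + sa) * (1 + sb)) <
          a * (1 - sa) * ((1 + sa) * (1 + sb)) := by rw [h1, h2]; exact h5
      exact lt_of_mul_lt_mul_right h6 (le_of_lt hpos)
    show b / 2 * (1 - sb) < a / 2 * (1 - sa)
    linarith
  · -- strictly increasing on [1, 3/2]
    intro a ha b hb hab
    obtain ⟨ha1, ha2⟩ := ha
    obtain ⟨hb1, hb2⟩ := hb
    set sa := Real.sqrt ((2 * a - 1) * (3 - 2 * a)) with hsa_def
    set sb := Real.sqrt ((2 * b - 1) * (3 - 2 * b)) with hsb_def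
    have hqb : (0:ℝ) ≤ (2 * b - 1) * (3 - 2 * b) := by nlinarith
    have hsa1 : sa ≤ 1 := Real.sqrt_le_one.mpr (by nlinarith)
    have hab' : sb < sa := by
      apply Real.sqrt_lt_sqrt hqb
      nlinarith
    show a / 2 * (1 - sa) < b / 2 * (1 - sb)
    have h1 : a / 2 * (1 - sa) ≤ b / 2 * (1 - sa) := by nlinarith
    have h2 : b / 2 * (1 - sa) < b / 2 * (1 - sb) := by nlinarith
    linarith
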